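/- arXiv:1404.2832 — 5 statements merged into one kernel-verified Lean document; each statement's English description precedes it below -/
import Mathlib

section
/- Let m ≥ 1 and λ_1 ≥ λ_2 ≥ … ≥ λ_m > 0, and let X_1, …, X_m be independent random variables with X_j exponentially distributed with parameter λ_j. Consider the mechanism Proportional, which on input x ∈ [0,∞)^m allocates item j with probability λ_j/λ_1 and charges γ*_m/λ_1 whenever Σ_{j=1}^m λ_j x_j ≥ γ*_m, and allocates nothing and charges 0 otherwise. Then Proportional is incentive compatible and individually rational, and its expected revenue equals E[(γ*_m/λ_1) · 1{Σ_j λ_j X_j ≥ γ*_m}] = (γ*_m)^{m+1} e^{−γ*_m} / ((m−1)! · λ_1). -/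
open MeasureTheory Set
open scoped ENNReal NNReal

/-- Density of the exponential distribution with parameter `l`. -/
noncomputable def expPDF (l x : ℝ) : ℝ := if 0 ≤ x then l * Real.exp (-(l * x)) else 0

/-- The product of `m` independent exponential distributions with parameters `l j`. -/
noncomputable def expProd (m : ℕ) (l : Fin m → ℝ) : Measure (Fin m → ℝ) :=
  Measure.pi fun j => volume.withDensity fun x => ENNReal.ofReal (expPDF (l j) x)

/-- The upper incomplete Gamma function `Γ(m, w) = ∫_w^∞ t^{m−1} e^{−t} dt`. -/
noncomputable def iGamma (m : ℕ) (w : ℝ) : ℝ := ∫ t in Set.Ioi w, t ^ (m - 1) * Real.exp (-t)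

/-- `g(m, w) = Γ(m+1, w) − (m+1) Γ(m, w)`. -/
noncomputable def gFun (m : ℕ) (w : ℝ) : ℝ := iGamma (m + 1) w - (m + 1) * iGamma m w

noncomputable def Gsum (n : ℕ) (c : ℝ) : ℝ :=
  if c ≤ 0 then 1 else Real.exp (-c) * ∑ k ∈ Finset.range n, c ^ k / (Nat.factorial k)

lemma Gsum_nonneg (n : ℕ) (c : ℝ) : 0 ≤ Gsum n c := by
  unfold Gsum
  split
  · norm_num
  · rename_i h
    push_neg at h
    have : (0:ℝ) ≤ ∑ k ∈ Finset.range n, c ^ k / (Nat.factorial k) := by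
      apply Finset.sum_nonneg
      intro k _
      positivity
    positivity

lemma Gsum_le_one (n : ℕ) (c : ℝ) : Gsum n c ≤ 1 := by
  unfold Gsum
  split
  · exact le_refl 1
  · rename_i h
    push_neg at h
    have h1 : ∑ k ∈ Finset.range n, c ^ k / (Nat.factorial k : ℝ) ≤ Real.exp c :=
      Real.sum_le_exp_of_nonneg h.le n
    calc Real.exp (-c) * ∑ k ∈ Finset.range n, c ^ k / (Nat.factorial k : ℝ)
        ≤ Real.exp (-c) * Real.exp c := by
          exact mul_le_mul_of_nonneg_left h1 (Real.exp_pos _).le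
      _ = 1 := by rw [← Real.exp_add]; norm_num

lemma measurable_Gsum (n : ℕ) : Measurable (Gsum n) := by
  unfold Gsum
  exact Measurable.ite (measurableSet_le measurable_id measurable_const)
    measurable_const (by fun_prop)

lemma exp_mul_Gsum_integrableOn (n : ℕ) (c a : ℝ) :
    IntegrableOn (fun u => Real.exp (-u) * Gsum n (c - u)) (Ioi a) := by
  have hmeas : Measurable (fun u => Real.exp (-u) * Gsum n (c - u)) :=
    (Real.measurable_exp.comp measurable_neg).mul
      ((measurable_Gsum n).comp (measurable_const.sub measurable_id))
  refine MeasureTheory.Integrable.mono (exp_neg_integrableOn_Ioi a one_pos) hmeas.aestronglyMeasurable ?_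
  filter_upwards with u
  rw [Real.norm_eq_abs, Real.norm_eq_abs, abs_mul, abs_of_pos (Real.exp_pos _),
    abs_of_pos (Real.exp_pos _), neg_one_mul]
  calc Real.exp (-u) * |Gsum n (c - u)| ≤ Real.exp (-u) * 1 := by
        apply mul_le_mul_of_nonneg_left _ (Real.exp_pos _).le
        rw [abs_of_nonneg (Gsum_nonneg _ _)]
        exact Gsum_le_one _ _
    _ = Real.exp (-u) := mul_one _

lemma integral_exp_Gsum (n : ℕ) (c : ℝ) :
    ∫ u in Ioi (0:ℝ), Real.exp (-u) * Gsum n (c - u) = Gsum (n+1) c := by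
  rcases le_or_gt c 0 with hc | hc
  · have : ∀ u ∈ Ioi (0:ℝ), Real.exp (-u) * Gsum n (c - u) = Real.exp (-u) := by
      intro u hu
      have : c - u ≤ 0 := by simp only [mem_Ioi] at hu; linarith
      simp [Gsum, this]
    rw [setIntegral_congr_fun measurableSet_Ioi this, integral_exp_neg_Ioi,
      neg_zero, Real.exp_zero, Gsum, if_pos hc]
  · -- split Ioi 0 = Ioo 0 c ∪ Ici c
    have hsplit : Ioo (0:ℝ) c ∪ Ici c = Ioi 0 := Ioo_union_Ici_eq_Ioi hc
    rw [← hsplit, setIntegral_union ((Iio_disjoint_Ici le_rfl).mono_left Ioo_subset_Iio_self) measurableSet_Ici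
      ((exp_mul_Gsum_integrableOn n c 0).mono_set (by rw [← hsplit]; exact subset_union_left))
      ((exp_mul_Gsum_integrableOn n c 0).mono_set (by rw [← hsplit]; exact subset_union_right))]
    have h2 : ∫ u in Ici c, Real.exp (-u) * Gsum n (c - u) = Real.exp (-c) := by
      have : ∀ u ∈ Ici c, Real.exp (-u) * Gsum n (c - u) = Real.exp (-u) := by
        intro u hu
        have : c - u ≤ 0 := by simp only [mem_Ici] at hu; linarith
        simp [Gsum, this]
      rw [setIntegral_congr_fun measurableSet_Ici this, integral_Ici_eq_integral_Ioi,
        integral_exp_neg_Ioi]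
    have h1 : ∫ u in Ioo (0:ℝ) c, Real.exp (-u) * Gsum n (c - u) =
        Real.exp (-c) * ∑ k ∈ Finset.range n, c ^ (k+1) / (Nat.factorial (k+1)) := by
      have heq : ∀ u ∈ Ioo (0:ℝ) c, Real.exp (-u) * Gsum n (c - u) =
          Real.exp (-c) * ∑ k ∈ Finset.range n, (c - u) ^ k / (Nat.factorial k) := by
        intro u hu
        have h0 : ¬ (c - u ≤ 0) := by push_neg; simp only [mem_Ioo] at hu; linarith
        rw [Gsum, if_neg h0, ← mul_assoc, ← Real.exp_add]
        ring_nf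
      rw [setIntegral_congr_fun measurableSet_Ioo heq, MeasureTheory.integral_const_mul]
      congr 1
      rw [← integral_Ioc_eq_integral_Ioo, ← intervalIntegral.integral_of_le hc.le]
      rw [intervalIntegral.integral_finset_sum]
      · apply Finset.sum_congr rfl
        intro k _
        have : ∀ u, (c - u) ^ k / (Nat.factorial k : ℝ) =
            (fun t => t ^ k / (Nat.factorial k : ℝ)) (c - u) := fun u => rfl
        rw [intervalIntegral.integral_comp_sub_left (fun t => t ^ k / (Nat.factorial k : ℝ)) c]
        simp only [sub_zero, sub_self]
        rw [intervalIntegral.integral_div, integral_pow]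
        simp only [ne_eq, zero_pow, Nat.factorial_succ]
        push_cast
        rw [zero_pow (by omega)]
        have hk : ((Nat.factorial k : ℝ)) ≠ 0 := Nat.cast_ne_zero.mpr (Nat.factorial_ne_zero k)
        field_simp
        ring
      · intro k _
        apply Continuous.intervalIntegrable
        fun_prop
    rw [h1, h2, Gsum, if_neg (not_le.mpr hc), Finset.sum_range_succ']
    simp [mul_add]

lemma integral_expPDF_Gsum (n : ℕ) {l0 : ℝ} (hl0 : 0 < l0) (c : ℝ) :
    ∫ y in Ioi (0:ℝ), l0 * Real.exp (-(l0 * y)) * Gsum n (c - l0 * y) = Gsum (n+1) c := by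
  have h := integral_comp_mul_left_Ioi (fun u => Real.exp (-u) * Gsum n (c - u)) 0 hl0
  simp only [mul_zero] at h
  rw [integral_exp_Gsum n c, smul_eq_mul] at h
  calc ∫ y in Ioi (0:ℝ), l0 * Real.exp (-(l0 * y)) * Gsum n (c - l0 * y)
      = l0 * ∫ y in Ioi (0:ℝ), Real.exp (-(l0 * y)) * Gsum n (c - l0 * y) := by
        rw [← MeasureTheory.integral_const_mul]
        congr 1
        funext y
        ring
    _ = l0 * (l0⁻¹ * Gsum (n+1) c) := by rw [h]
    _ = Gsum (n+1) c := by field_simp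

lemma measurable_expPDF (l : ℝ) : Measurable (expPDF l) := by
  unfold expPDF
  exact Measurable.ite measurableSet_Ici (by fun_prop) measurable_const

lemma expPDF_nonneg {l : ℝ} (hl : 0 < l) (x : ℝ) : 0 ≤ expPDF l x := by
  unfold expPDF; split
  · positivity
  · exact le_refl 0

lemma expPDF_le {l : ℝ} (hl : 0 < l) (x : ℝ) : expPDF l x ≤ l * Real.exp (-l * x) := by
  unfold expPDF; split
  · rw [neg_mul]
  · positivity

lemma expComp_eq (r : ℝ) :
    (volume.withDensity fun x => ENNReal.ofReal (expPDF r x)) = ProbabilityTheory.expMeasure r := by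
  rw [ProbabilityTheory.expMeasure, ProbabilityTheory.gammaMeasure]
  congr 1
  funext x
  rw [show ProbabilityTheory.gammaPDF 1 r x = ProbabilityTheory.exponentialPDF r x from rfl,
    ProbabilityTheory.exponentialPDF_eq]
  rfl

lemma isProb_expComp {r : ℝ} (hr : 0 < r) :
    IsProbabilityMeasure (volume.withDensity fun x => ENNReal.ofReal (expPDF r x)) := by
  rw [expComp_eq]
  exact ProbabilityTheory.isProbabilityMeasure_expMeasure hr

lemma expProd_lintegral : ∀ (n : ℕ) (l : Fin n → ℝ), (∀ j, 0 < l j) → ∀ (c : ℝ),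
    ∫⁻ x, (if c ≤ ∑ i, l i * x i then (1:ℝ≥0∞) else 0) ∂(expProd n l) = ENNReal.ofReal (Gsum n c)
  | 0, l, hl, c => by
    have h0 : ∀ x : Fin 0 → ℝ, (∑ i, l i * x i) = 0 := by intro x; simp
    simp only [h0]
    rcases le_or_gt c 0 with hc | hc
    · rw [if_pos hc]
      rw [lintegral_one]
      rw [expProd, Measure.pi_univ]
      simp [Gsum, hc]
    · rw [if_neg (not_le.mpr hc)]
      simp only [lintegral_zero]
      rw [Gsum, if_neg (not_le.mpr hc)]
      simp
  | (n+1), l, hl, c => by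
    haveI : ∀ j : Fin (n+1),
        IsProbabilityMeasure (volume.withDensity fun x => ENNReal.ofReal (expPDF (l j) x)) :=
      fun j => isProb_expComp (hl j)
    set μ : Fin (n+1) → Measure ℝ :=
      fun j => volume.withDensity fun x => ENNReal.ofReal (expPDF (l j) x) with hμ
    have hmp := (measurePreserving_piFinSuccAbove μ 0).symm
    set e := MeasurableEquiv.piFinSuccAbove (fun _ : Fin (n+1) => ℝ) 0 with he
    have hfmeas : Measurable (fun x : Fin (n+1) → ℝ =>
        (if c ≤ ∑ i, l i * x i then (1:ℝ≥0∞) else 0)) := by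
      apply Measurable.ite _ measurable_const measurable_const
      exact measurableSet_le measurable_const (by fun_prop)
    have step1 : ∫⁻ x, (if c ≤ ∑ i, l i * x i then (1:ℝ≥0∞) else 0) ∂(expProd (n+1) l)
        = ∫⁻ p, (if c ≤ ∑ i, l i * (e.symm p) i then (1:ℝ≥0∞) else 0)
            ∂((μ 0).prod (Measure.pi fun j => μ ((0:Fin (n+1)).succAbove j))) := by
      rw [expProd, ← hμ]
      exact (hmp.lintegral_comp hfmeas).symm
    have hsum : ∀ (y : ℝ) (z : Fin n → ℝ),
        (∑ i, l i * (e.symm (y, z)) i) = l 0 * y + ∑ j, l j.succ * z j := by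
      intro y z
      have hsymm : e.symm (y, z) = Fin.cons y z := by
        rw [he]
        simp [MeasurableEquiv.piFinSuccAbove, Fin.insertNthEquiv, Fin.insertNth_zero]
      rw [hsymm, Fin.sum_univ_succ]
      simp
    rw [step1]
    have hprodmeas : Measurable (fun p : ℝ × (Fin n → ℝ) =>
        (if c ≤ ∑ i, l i * (e.symm p) i then (1:ℝ≥0∞) else 0)) :=
      hfmeas.comp e.symm.measurable
    rw [MeasureTheory.lintegral_prod _ hprodmeas.aemeasurable]
    have hsucc : (fun j : Fin n => μ ((0:Fin (n+1)).succAbove j)) = fun j => μ j.succ := by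
      funext j; rw [Fin.succAbove_zero]
    have inner : ∀ y : ℝ,
        ∫⁻ z, (if c ≤ ∑ i, l i * (e.symm (y, z)) i then (1:ℝ≥0∞) else 0)
          ∂(Measure.pi fun j => μ ((0:Fin (n+1)).succAbove j))
        = ENNReal.ofReal (Gsum n (c - l 0 * y)) := by
      intro y
      have := expProd_lintegral n (fun j => l j.succ) (fun j => hl j.succ) (c - l 0 * y)
      rw [expProd] at this
      rw [hsucc]
      rw [← this]
      apply lintegral_congr
      intro z
      rw [hsum y z]
      apply if_congr _ rfl rfl
      constructor <;> intro h <;> linarith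
    simp_rw [inner]
    -- now integral over μ 0 = withDensity
    have h0 : μ 0 = volume.withDensity (fun x => ENNReal.ofReal (expPDF (l 0) x)) := rfl
    have hgm : Measurable (fun y : ℝ => ENNReal.ofReal (Gsum n (c - l 0 * y))) :=
      ((measurable_Gsum n).comp (by fun_prop : Measurable fun y : ℝ => c - l 0 * y)).ennreal_ofReal
    rw [h0, lintegral_withDensity_eq_lintegral_mul volume
      ((measurable_expPDF (l 0)).ennreal_ofReal) hgm]
    have hcomb : ∀ y : ℝ,
        ((fun y => ENNReal.ofReal (expPDF (l 0) y)) * fun y => ENNReal.ofReal (Gsum n (c - l 0 * y))) y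
        = ENNReal.ofReal (expPDF (l 0) y * Gsum n (c - l 0 * y)) := by
      intro y
      simp only [Pi.mul_apply]
      rw [ENNReal.ofReal_mul (expPDF_nonneg (hl 0) y)]
    rw [lintegral_congr hcomb]
    have hsupp : Function.support (fun y => ENNReal.ofReal (expPDF (l 0) y * Gsum n (c - l 0 * y)))
        ⊆ Ici 0 := by
      intro y hy
      by_contra hy0
      simp only [mem_Ici, not_le] at hy0
      apply hy
      have : expPDF (l 0) y = 0 := by rw [expPDF, if_neg (not_le.mpr hy0)]
      simp [this]
    rw [← setLIntegral_eq_of_support_subset hsupp]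
    rw [← setLIntegral_congr (Ioi_ae_eq_Ici (a := (0:ℝ)))]
    have hint : IntegrableOn (fun y => expPDF (l 0) y * Gsum n (c - l 0 * y)) (Ioi 0) := by
      have hbd : Integrable (fun y => l 0 * Real.exp (-(l 0) * y)) (volume.restrict (Ioi 0)) :=
        (exp_neg_integrableOn_Ioi 0 (hl 0)).const_mul (l 0)
      refine MeasureTheory.Integrable.mono hbd ?_ ?_
      · exact ((measurable_expPDF (l 0)).mul
          ((measurable_Gsum n).comp (by fun_prop))).aestronglyMeasurable
      · filter_upwards with y
        rw [Real.norm_eq_abs, Real.norm_eq_abs,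
          abs_of_nonneg (mul_nonneg (expPDF_nonneg (hl 0) y) (Gsum_nonneg _ _)),
          abs_of_nonneg (mul_nonneg (hl 0).le (Real.exp_pos _).le)]
        calc expPDF (l 0) y * Gsum n (c - l 0 * y) ≤ expPDF (l 0) y * 1 :=
              mul_le_mul_of_nonneg_left (Gsum_le_one _ _) (expPDF_nonneg (hl 0) y)
          _ = expPDF (l 0) y := mul_one _
          _ ≤ l 0 * Real.exp (-(l 0) * y) := expPDF_le (hl 0) y
    rw [← MeasureTheory.ofReal_integral_eq_lintegral_ofReal hint
      (by filter_upwards with y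
          exact mul_nonneg (expPDF_nonneg (hl 0) y) (Gsum_nonneg _ _))]
    congr 1
    rw [← integral_expPDF_Gsum n (hl 0) c]
    apply setIntegral_congr_fun measurableSet_Ioi
    intro y hy
    simp only [mem_Ioi] at hy
    simp only [expPDF, if_pos hy.le]

lemma iGamma_closed (n : ℕ) {w : ℝ} (hw : 0 < w) :
    iGamma (n+1) w = (Nat.factorial n : ℝ) *
      (Real.exp (-w) * ∑ k ∈ Finset.range (n+1), w ^ k / (Nat.factorial k)) := by
  set P : ℝ → ℝ := fun t => ∑ k ∈ Finset.range (n+1),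
    ((Nat.factorial n : ℝ) / (Nat.factorial k)) * t ^ k with hP
  set Q : ℝ → ℝ := fun t => ∑ k ∈ Finset.range n,
    ((Nat.factorial n : ℝ) / (Nat.factorial k)) * t ^ k with hQ
  have hPderiv : ∀ t : ℝ, HasDerivAt P (Q t) t := by
    intro t
    have h1 : HasDerivAt P (∑ k ∈ Finset.range (n+1),
        ((Nat.factorial n : ℝ) / (Nat.factorial k)) * (k * t ^ (k-1))) t := by
      apply HasDerivAt.fun_sum
      intro k _
      exact (hasDerivAt_pow k t).const_mul _
    convert h1 using 1
    rw [Finset.sum_range_succ']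
    simp only [Nat.cast_zero, zero_mul, mul_zero, add_zero]
    apply Finset.sum_congr rfl
    intro i _
    have hfac : ((Nat.factorial (i+1) : ℝ)) = (i+1) * (Nat.factorial i) := by
      push_cast [Nat.factorial_succ]; ring
    have hi : (Nat.factorial i : ℝ) ≠ 0 := Nat.cast_ne_zero.mpr (Nat.factorial_ne_zero i)
    rw [hfac]
    have : ((i:ℝ)+1) ≠ 0 := by positivity
    field_simp
    push_cast
    ring
  have hPQ : ∀ t : ℝ, P t - Q t = t ^ n := by
    intro t
    rw [hP, hQ]
    simp only [Finset.sum_range_succ]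
    have : ((Nat.factorial n : ℝ) / (Nat.factorial n)) = 1 := by
      apply div_self
      exact Nat.cast_ne_zero.mpr (Nat.factorial_ne_zero n)
    rw [this]
    ring
  have hfderiv : ∀ t : ℝ, HasDerivAt (fun t => -(Real.exp (-t) * P t))
      (t ^ n * Real.exp (-t)) t := by
    intro t
    have h1 : HasDerivAt (fun t : ℝ => Real.exp (-t)) (-Real.exp (-t)) t := by
      simpa using (hasDerivAt_neg t).exp
    have h2 : HasDerivAt (fun t => -(Real.exp (-t) * P t))
        (-(-Real.exp (-t) * P t + Real.exp (-t) * Q t)) t := (h1.mul (hPderiv t)).neg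
    convert h2 using 1
    linear_combination (-(Real.exp (-t))) * hPQ t
  have htend : Filter.Tendsto (fun t => -(Real.exp (-t) * P t)) Filter.atTop (nhds 0) := by
    have h1 : Filter.Tendsto (fun t : ℝ => ∑ k ∈ Finset.range (n+1),
        (-(((Nat.factorial n : ℝ) / (Nat.factorial k)))) * (t ^ k * Real.exp (-t)))
        Filter.atTop (nhds (∑ k ∈ Finset.range (n+1), (0:ℝ))) := by
      apply tendsto_finset_sum
      intro k _
      have := (Real.tendsto_pow_mul_exp_neg_atTop_nhds_zero k).const_mul
        (-(((Nat.factorial n : ℝ) / (Nat.factorial k))))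
      simpa using this
    simp only [Finset.sum_const_zero] at h1
    apply h1.congr
    intro t
    rw [hP, Finset.mul_sum, ← neg_eq_iff_eq_neg]
    rw [← Finset.sum_neg_distrib]
    apply Finset.sum_congr rfl
    intro k _
    ring
  have hval := integral_Ioi_of_hasDerivAt_of_nonneg'
    (g := fun t => -(Real.exp (-t) * P t)) (g' := fun t => t ^ n * Real.exp (-t))
    (a := w) (fun x _ => hfderiv x)
    (fun x hx => by
      have : (0:ℝ) < x := lt_trans hw hx
      positivity)
    htend
  rw [iGamma]
  have hexp : ∀ t : ℝ, t ^ (n + 1 - 1) * Real.exp (-t) = t ^ n * Real.exp (-t) := by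
    intro t; norm_num
  simp only [hexp]
  rw [hval]
  rw [zero_sub, neg_neg, hP]
  simp only [Finset.mul_sum]
  apply Finset.sum_congr rfl
  intro k _
  ring

lemma fact_sum_eq_of_root (n : ℕ) {γ : ℝ} (hγ : 0 < γ) (hroot : gFun (n+1) γ = 0) :
    (Nat.factorial n : ℝ) * ∑ k ∈ Finset.range (n+1), γ ^ k / (Nat.factorial k)
      = γ ^ (n+1) := by
  have h1 := iGamma_closed (n+1) hγ
  have h2 := iGamma_closed n hγ
  rw [gFun, h1, h2] at hroot
  set S : ℝ := ∑ k ∈ Finset.range (n+1), γ ^ k / (Nat.factorial k) with hS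
  have hsplit : ∑ k ∈ Finset.range (n+2), γ ^ k / (Nat.factorial k)
      = S + γ ^ (n+1) / (Nat.factorial (n+1)) := by
    rw [Finset.sum_range_succ]
  rw [hsplit] at hroot
  have hfac : ((Nat.factorial (n+1) : ℝ)) = (n+1) * (Nat.factorial n) := by
    push_cast [Nat.factorial_succ]; ring
  have hE : Real.exp (-γ) ≠ 0 := Real.exp_ne_zero _
  have hfn : (Nat.factorial n : ℝ) ≠ 0 := Nat.cast_ne_zero.mpr (Nat.factorial_ne_zero n)
  have hn1 : ((n:ℝ)+1) ≠ 0 := by positivity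
  rw [hfac] at hroot
  push_cast at hroot
  field_simp at hroot
  nlinarith [hroot, Real.exp_pos (-γ)]

/-- Allocation of the `Proportional` mechanism: when `∑ j λ_j x_j ≥ γ*_m`, item `j` is sold
with probability `λ_j / λ_1` (where `λ_1 = l 0` is the largest parameter); otherwise
nothing is allocated. -/
noncomputable def propAlloc (m : ℕ) (hm : 1 ≤ m) (l : Fin m → ℝ) (γ : ℝ) :
    (Fin m → ℝ) → Fin m → ℝ :=
  fun x j => if γ ≤ ∑ i, l i * x i then l j / l ⟨0, hm⟩ else 0

/-- Payment of the `Proportional` mechanism: charge `γ*_m / λ_1` exactly when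
`∑ j λ_j x_j ≥ γ*_m`. -/
noncomputable def propPay (m : ℕ) (hm : 1 ≤ m) (l : Fin m → ℝ) (γ : ℝ) :
    (Fin m → ℝ) → ℝ :=
  fun x => if γ ≤ ∑ i, l i * x i then γ / l ⟨0, hm⟩ else 0

/-- **The `Proportional` mechanism.** For `m` goods with independent exponential valuations
with parameters `λ_1 ≥ λ_2 ≥ … ≥ λ_m > 0` and `γ*_m` the unique positive root of `g(m, ·)`,
the mechanism `Proportional` is incentive compatible and individually rational on `[0,∞)^m`,
its allocation probabilities lie in `[0,1]`, and its expected revenue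
`E[(γ*_m/λ_1) · 1{∑_j λ_j X_j ≥ γ*_m}]` equals `(γ*_m)^{m+1} e^{−γ*_m} / ((m−1)! λ_1)`. -/
theorem proportional_mechanism (m : ℕ) (hm : 1 ≤ m) (l : Fin m → ℝ) (hl : ∀ j, 0 < l j)
    (hsort : ∀ i j : Fin m, i ≤ j → l j ≤ l i)
    (γ : ℝ) (hγ_pos : 0 < γ) (hγ_root : gFun m γ = 0) :
    (∀ x ∈ Set.Ici (0 : Fin m → ℝ), ∀ j, propAlloc m hm l γ x j ∈ Set.Icc (0:ℝ) 1) ∧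
    (∀ x ∈ Set.Ici (0 : Fin m → ℝ),
      0 ≤ (∑ j, propAlloc m hm l γ x j * x j) - propPay m hm l γ x) ∧
    (∀ x ∈ Set.Ici (0 : Fin m → ℝ), ∀ x' ∈ Set.Ici (0 : Fin m → ℝ),
      (∑ j, propAlloc m hm l γ x' j * x j) - propPay m hm l γ x' ≤
        (∑ j, propAlloc m hm l γ x j * x j) - propPay m hm l γ x) ∧
    ∫ x, propPay m hm l γ x ∂(expProd m l) =
      γ ^ (m + 1) * Real.exp (-γ) / (Nat.factorial (m - 1) * l ⟨0, hm⟩) := by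
  have hl0 : 0 < l ⟨0, hm⟩ := hl _
  have hsum_div : ∀ x : Fin m → ℝ,
      (∑ j, (l j / l ⟨0, hm⟩) * x j) = (∑ j, l j * x j) / l ⟨0, hm⟩ := by
    intro x
    rw [Finset.sum_div]
    apply Finset.sum_congr rfl
    intro j _
    ring
  refine ⟨?_, ?_, ?_, ?_⟩
  · intro x _ j
    unfold propAlloc
    split
    · refine ⟨div_nonneg (hl _).le hl0.le, ?_⟩
      rw [div_le_one hl0]
      exact hsort ⟨0, hm⟩ j (by simp [Fin.le_def])
    · exact ⟨le_refl 0, zero_le_one⟩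
  · intro x hx
    unfold propAlloc propPay
    by_cases hc : γ ≤ ∑ i, l i * x i
    · simp only [if_pos hc]
      rw [hsum_div, div_sub_div_same]
      apply div_nonneg (by linarith) hl0.le
    · simp only [if_neg hc]
      simp
  · intro x hx x' _
    unfold propAlloc propPay
    by_cases h1 : γ ≤ ∑ i, l i * x i <;> by_cases h2 : γ ≤ ∑ i, l i * x' i
    · simp only [if_pos h1, if_pos h2]
      exact le_refl _
    · simp only [if_pos h1, if_neg h2]
      simp only [zero_mul, Finset.sum_const_zero, sub_zero]
      rw [hsum_div, div_sub_div_same]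
      apply div_nonneg (by linarith) hl0.le
    · simp only [if_neg h1, if_pos h2]
      simp only [zero_mul, Finset.sum_const_zero, sub_zero]
      rw [hsum_div, div_sub_div_same]
      apply div_nonpos_of_nonpos_of_nonneg (by push_neg at h1; linarith) hl0.le
    · simp only [if_neg h1, if_neg h2]
      exact le_refl _
  · have hmeasS : Measurable (fun x : Fin m → ℝ => ∑ i, l i * x i) := by fun_prop
    have hset : MeasurableSet {x : Fin m → ℝ | γ ≤ ∑ i, l i * x i} :=
      measurableSet_le measurable_const hmeasS
    have hmeas : Measurable (propPay m hm l γ) := by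
      unfold propPay
      exact Measurable.ite hset measurable_const measurable_const
    have h0 : ∀ x, 0 ≤ propPay m hm l γ x := by
      intro x
      unfold propPay
      split
      · exact div_nonneg hγ_pos.le hl0.le
      · exact le_refl 0
    rw [MeasureTheory.integral_eq_lintegral_of_nonneg_ae
      (Filter.Eventually.of_forall h0) hmeas.aestronglyMeasurable]
    have hrw : ∀ x : Fin m → ℝ, ENNReal.ofReal (propPay m hm l γ x)
        = ENNReal.ofReal (γ / l ⟨0, hm⟩) * (if γ ≤ ∑ i, l i * x i then (1:ℝ≥0∞) else 0) := by
      intro x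
      unfold propPay
      split <;> simp
    rw [lintegral_congr hrw]
    have hifmeas : Measurable (fun x : Fin m → ℝ =>
        (if γ ≤ ∑ i, l i * x i then (1:ℝ≥0∞) else 0)) :=
      Measurable.ite hset measurable_const measurable_const
    rw [lintegral_const_mul _ hifmeas]
    rw [expProd_lintegral m l hl γ]
    rw [← ENNReal.ofReal_mul (div_nonneg hγ_pos.le hl0.le)]
    rw [ENNReal.toReal_ofReal (mul_nonneg (div_nonneg hγ_pos.le hl0.le) (Gsum_nonneg _ _))]
    rw [Gsum, if_neg (not_le.mpr hγ_pos)]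
    obtain ⟨n, rfl⟩ : ∃ n, m = n + 1 := ⟨m - 1, (Nat.succ_pred_eq_of_pos hm).symm⟩
    have hkey := fact_sum_eq_of_root n hγ_pos hγ_root
    have hfn : (Nat.factorial n : ℝ) ≠ 0 := Nat.cast_ne_zero.mpr (Nat.factorial_ne_zero n)
    simp only [Nat.add_sub_cancel]
    have hl0' : l ⟨0, hm⟩ ≠ 0 := hl0.ne'
    have hS : ∑ k ∈ Finset.range (n + 1), γ ^ k / (Nat.factorial k : ℝ)
        = γ ^ (n+1) / (Nat.factorial n : ℝ) := by
      rw [eq_div_iff hfn]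
      linear_combination hkey
    rw [hS]
    field_simp
    ring
end

section
/- Fix a positive integer m and define g(m, w) = Γ(m+1, w) − (m+1)Γ(m, w) for w ≥ 0. Then g(m, 0) = −(m−1)!, g(m, ·) is strictly increasing on [0, m+1] and strictly decreasing on [m+1, ∞), g(m, w) → 0 as w → ∞, and there exists a unique γ ∈ (0, ∞) with g(m, γ) = 0; moreover this root satisfies γ ∈ (0, m+1), g(m, w) < 0 for all w ∈ [0, γ), and g(m, w) > 0 for all w ∈ (γ, ∞). -/
open MeasureTheory Filter
open Set

noncomputable def fInt (n : ℕ) (t : ℝ) : ℝ := t ^ n * Real.exp (-t)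

lemma fInt_cont (n : ℕ) : Continuous (fInt n) :=
  (continuous_pow n).mul (Real.continuous_exp.comp continuous_neg)

lemma fInt_integrableOn (n : ℕ) {w : ℝ} (hw : 0 ≤ w) :
    IntegrableOn (fInt n) (Ioi w) := by
  have h := Real.GammaIntegral_convergent (s := (n : ℝ) + 1) (by positivity)
  have h0 : IntegrableOn (fInt n) (Ioi 0) := by
    refine h.congr_fun (fun x hx => ?_) measurableSet_Ioi
    simp only [fInt, add_sub_cancel_right]
    rw [Real.rpow_natCast]; ring
  exact h0.mono_set (Ioi_subset_Ioi hw)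

lemma iGamma_def' (m : ℕ) (w : ℝ) : iGamma m w = ∫ t in Ioi w, fInt (m - 1) t := rfl

lemma iGamma_eq (m : ℕ) {w : ℝ} (hw : 0 ≤ w) :
    iGamma m w = iGamma m 0 - ∫ t in (0:ℝ)..w, fInt (m - 1) t := by
  have h1 : IntegrableOn (fInt (m-1)) (Ioi 0) := fInt_integrableOn _ le_rfl
  have hsplit : iGamma m 0 = (∫ t in Ioc 0 w, fInt (m-1) t) + iGamma m w := by
    rw [iGamma_def', iGamma_def', ← setIntegral_union (Ioc_disjoint_Ioi le_rfl)
      measurableSet_Ioi (h1.mono_set Ioc_subset_Ioi_self) (h1.mono_set (Ioi_subset_Ioi hw)),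
      Ioc_union_Ioi_eq_Ioi hw]
  rw [intervalIntegral.integral_of_le hw]
  linarith [hsplit]

noncomputable def Phi (m : ℕ) (w : ℝ) : ℝ := iGamma m 0 - ∫ t in (0:ℝ)..w, fInt (m - 1) t

lemma hasDerivAt_Phi (m : ℕ) (w : ℝ) : HasDerivAt (Phi m) (-(fInt (m-1) w)) w := by
  have h : HasDerivAt (fun u => ∫ t in (0:ℝ)..u, fInt (m-1) t) (fInt (m-1) w) w :=
    intervalIntegral.integral_hasDerivAt_right
      ((fInt_cont (m-1)).intervalIntegrable _ _)
      ((fInt_cont (m-1)).aestronglyMeasurable.stronglyMeasurableAtFilter)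
      (fInt_cont (m-1)).continuousAt
  exact h.const_sub (iGamma m 0)

lemma continuous_Phi (m : ℕ) : Continuous (Phi m) :=
  continuous_iff_continuousAt.2 fun w => (hasDerivAt_Phi m w).continuousAt

lemma iGamma_eqOn (m : ℕ) : EqOn (iGamma m) (Phi m) (Ici 0) := fun w hw => iGamma_eq m hw

lemma continuousOn_iGamma (m : ℕ) : ContinuousOn (iGamma m) (Ici 0) :=
  ((continuous_Phi m).continuousOn).congr (iGamma_eqOn m)

lemma hasDerivAt_iGamma (m : ℕ) {w : ℝ} (hw : 0 < w) :
    HasDerivAt (iGamma m) (-(fInt (m-1) w)) w := by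
  refine (hasDerivAt_Phi m w).congr_of_eventuallyEq ?_
  filter_upwards [Ioi_mem_nhds hw] with x hx
  exact iGamma_eqOn m (show (0:ℝ) ≤ x from le_of_lt hx)

lemma tendsto_iGamma (m : ℕ) : Tendsto (iGamma m) atTop (nhds 0) := by
  have h1 : IntegrableOn (fInt (m-1)) (Ioi 0) := fInt_integrableOn _ le_rfl
  have h2 : Tendsto (fun w : ℝ => ∫ t in (0:ℝ)..w, fInt (m-1) t) atTop
      (nhds (iGamma m 0)) :=
    intervalIntegral_tendsto_integral_Ioi 0 h1 tendsto_id
  have h3 : Tendsto (Phi m) atTop (nhds 0) := by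
    have := (tendsto_const_nhds (x := iGamma m 0) (f := atTop)).sub h2
    show Tendsto (fun w => iGamma m 0 - ∫ t in (0:ℝ)..w, fInt (m - 1) t) atTop (nhds 0)
    simpa using this
  refine h3.congr' ?_
  filter_upwards [eventually_ge_atTop (0:ℝ)] with w hw
  exact (iGamma_eq m hw).symm

lemma iGamma_zero (m : ℕ) (hm : 1 ≤ m) : iGamma m 0 = Nat.factorial (m - 1) := by
  have hpos : (0:ℝ) < m := by exact_mod_cast hm
  have hG : Real.Gamma m = ∫ x in Ioi (0:ℝ), Real.exp (-x) * x ^ ((m:ℝ) - 1) :=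
    Real.Gamma_eq_integral hpos
  have hcast : ((m:ℝ) - 1) = ((m - 1 : ℕ) : ℝ) := by
    rw [Nat.cast_sub hm, Nat.cast_one]
  have heq : iGamma m 0 = Real.Gamma m := by
    rw [hG, iGamma_def']
    refine setIntegral_congr_fun measurableSet_Ioi fun x hx => ?_
    rw [hcast, Real.rpow_natCast]
    simp only [fInt]; ring
  rw [heq]
  have : Real.Gamma ((m - 1 : ℕ) + 1) = Nat.factorial (m - 1) :=
    Real.Gamma_nat_eq_factorial (m - 1)
  rwa [show ((m - 1 : ℕ) : ℝ) + 1 = (m : ℝ) by rw [← hcast]; ring] at this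

lemma gFun_zero (m : ℕ) (hm : 1 ≤ m) : gFun m 0 = -(Nat.factorial (m - 1)) := by
  have h1 : iGamma (m+1) 0 = Nat.factorial m := by
    have := iGamma_zero (m+1) (by omega)
    simpa using this
  have h2 : iGamma m 0 = Nat.factorial (m-1) := iGamma_zero m hm
  have hfac : (Nat.factorial m : ℝ) = m * Nat.factorial (m - 1) := by
    conv_lhs => rw [show m = (m - 1) + 1 from (Nat.succ_pred_eq_of_pos hm).symm]
    push_cast [Nat.factorial_succ]
    rw [show ((m - 1 : ℕ) : ℝ) + 1 = (m : ℝ) by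
      have : (m - 1 : ℕ) + 1 = m := Nat.succ_pred_eq_of_pos hm
      exact_mod_cast congrArg (Nat.cast : ℕ → ℝ) this]
  rw [gFun, h1, h2, hfac]
  push_cast
  ring

lemma hasDerivAt_gFun (m : ℕ) (hm : 1 ≤ m) {w : ℝ} (hw : 0 < w) :
    HasDerivAt (gFun m) (fInt (m-1) w * (((m:ℝ) + 1) - w)) w := by
  have h1 := hasDerivAt_iGamma (m+1) hw
  have h2 := (hasDerivAt_iGamma m hw).const_mul ((m:ℝ) + 1)
  have h := h1.sub h2
  have hexp : fInt ((m+1)-1) w = fInt (m-1) w * w := by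
    simp only [fInt, Nat.add_sub_cancel]
    conv_lhs => rw [show m = (m - 1) + 1 from (Nat.succ_pred_eq_of_pos hm).symm]
    rw [pow_succ]; ring
  have : gFun m = fun w => iGamma (m+1) w - ((m:ℝ)+1) * iGamma m w := by
    funext x; simp [gFun]
  rw [this]
  rw [show fInt (m-1) w * ((m:ℝ)+1 - w) = -fInt ((m+1)-1) w - ((m:ℝ)+1) * -fInt (m-1) w by
    rw [hexp]; ring]
  exact h

lemma tendsto_gFun (m : ℕ) : Tendsto (gFun m) atTop (nhds 0) := by
  have := (tendsto_iGamma (m+1)).sub ((tendsto_iGamma m).const_mul ((m:ℝ)+1))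
  show Tendsto (fun w => iGamma (m+1) w - ((m:ℝ)+1) * iGamma m w) atTop (nhds 0)
  simpa using this

lemma continuousOn_gFun (m : ℕ) : ContinuousOn (gFun m) (Ici 0) := by
  have : gFun m = fun w => iGamma (m+1) w - ((m:ℝ)+1) * iGamma m w := by
    funext x; simp [gFun]
  rw [this]
  exact (continuousOn_iGamma (m+1)).sub (continuousOn_const.mul (continuousOn_iGamma m))

/-- **Shape of the function `g(m, ·)`.**  For every positive integer `m`:
`g(m, 0) = −(m−1)!`; `g(m, ·)` is strictly increasing on `[0, m+1]` and strictly decreasing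
on `[m+1, ∞)`; `g(m, w) → 0` as `w → ∞`; there is a unique positive root `γ`, and this root
lies in `(0, m+1)`, with `g(m, w) < 0` for `w ∈ [0, γ)` and `g(m, w) > 0` for
`w ∈ (γ, ∞)`. -/
theorem gFun_properties (m : ℕ) (hm : 1 ≤ m) :
    gFun m 0 = -(Nat.factorial (m - 1)) ∧
    StrictMonoOn (gFun m) (Set.Icc 0 ((m : ℝ) + 1)) ∧
    StrictAntiOn (gFun m) (Set.Ici ((m : ℝ) + 1)) ∧
    Tendsto (gFun m) atTop (nhds 0) ∧
    (∃! γ : ℝ, 0 < γ ∧ gFun m γ = 0) ∧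
    (∀ γ : ℝ, 0 < γ → gFun m γ = 0 →
      γ < (m : ℝ) + 1 ∧
      (∀ w ∈ Set.Ico (0:ℝ) γ, gFun m w < 0) ∧
      (∀ w ∈ Set.Ioi γ, 0 < gFun m w)) := by
  set M : ℝ := (m : ℝ) + 1 with hMdef
  have hM0 : (0:ℝ) < M := by positivity
  have hmono : StrictMonoOn (gFun m) (Icc 0 M) := by
    apply strictMonoOn_of_deriv_pos (convex_Icc 0 M)
      ((continuousOn_gFun m).mono (fun x hx => hx.1))
    intro x hx
    rw [interior_Icc] at hx
    rw [(hasDerivAt_gFun m hm hx.1).deriv]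
    have h1 : 0 < fInt (m-1) x := by
      simp only [fInt]
      have := hx.1
      positivity
    have h2 := hx.2
    rw [← hMdef]
    nlinarith
  have hanti : StrictAntiOn (gFun m) (Ici M) := by
    apply strictAntiOn_of_deriv_neg (convex_Ici M)
      ((continuousOn_gFun m).mono (fun x hx => le_trans hM0.le hx))
    intro x hx
    rw [interior_Ici] at hx
    have hx0 : 0 < x := lt_trans hM0 hx
    rw [(hasDerivAt_gFun m hm hx0).deriv]
    have h1 : 0 < fInt (m-1) x := by simp only [fInt]; positivity
    rw [mem_Ioi] at hx
    rw [← hMdef]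
    nlinarith
  have htend := tendsto_gFun m
  have hpos : ∀ w, M ≤ w → 0 < gFun m w := by
    have hnn : ∀ w, M ≤ w → 0 ≤ gFun m w := by
      intro w hw
      refine le_of_tendsto htend ?_
      filter_upwards [eventually_ge_atTop w] with b hb
      rcases eq_or_lt_of_le hb with rfl | hb'
      · exact le_rfl
      · exact (hanti hw (le_trans hw hb) hb').le
    intro w hw
    calc (0:ℝ) ≤ gFun m (w+1) := hnn _ (by linarith)
      _ < gFun m w := hanti hw (mem_Ici.mpr (by linarith)) (by linarith)
  have hg0 : gFun m 0 = -(Nat.factorial (m-1)) := gFun_zero m hm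
  have hg0neg : gFun m 0 < 0 := by
    rw [hg0]
    have : (0:ℝ) < (Nat.factorial (m-1) : ℝ) := by
      exact_mod_cast Nat.factorial_pos (m-1)
    linarith
  have hgM : 0 < gFun m M := hpos M le_rfl
  obtain ⟨γ₀, hγ₀mem, hγ₀⟩ : ∃ γ ∈ Ioo (0:ℝ) M, gFun m γ = 0 := by
    have h := intermediate_value_Ioo (le_of_lt hM0)
      ((continuousOn_gFun m).mono (fun x hx => hx.1))
    obtain ⟨γ, hγ, hval⟩ := h ⟨hg0neg, hgM⟩
    exact ⟨γ, hγ, hval⟩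
  have hroot : ∀ γ : ℝ, 0 < γ → gFun m γ = 0 →
      γ < M ∧ (∀ w ∈ Ico (0:ℝ) γ, gFun m w < 0) ∧ (∀ w ∈ Ioi γ, 0 < gFun m w) := by
    intro γ hγ hγ0
    have hγM : γ < M := by
      by_contra h
      exact absurd hγ0 (ne_of_gt (hpos γ (le_of_not_gt h)))
    refine ⟨hγM, ?_, ?_⟩
    · intro w hw
      have := hmono ⟨hw.1, by linarith [hw.2]⟩ ⟨hγ.le, hγM.le⟩ hw.2
      linarith
    · intro w hw
      rw [mem_Ioi] at hw
      rcases le_or_gt w M with h | h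
      · have := hmono ⟨hγ.le, hγM.le⟩ ⟨by linarith, h⟩ hw
        linarith
      · exact hpos w h.le
  have huniq : ∃! γ : ℝ, 0 < γ ∧ gFun m γ = 0 := by
    refine ⟨γ₀, ⟨hγ₀mem.1, hγ₀⟩, ?_⟩
    rintro y ⟨hy, hy0⟩
    have h1 := hroot y hy hy0
    exact hmono.injOn ⟨hy.le, h1.1.le⟩ ⟨hγ₀mem.1.le, hγ₀mem.2.le⟩ (by rw [hy0, hγ₀])
  exact ⟨hg0, hmono, hanti, htend, huniq, hroot⟩
end

section
/- For every positive integer m, g(m, m+1) = (m−1)! · e^{−(m+1)} · Σ_{k=0}^{m−1} ( (m+1)^m/m! − (m+1)^k/k! ) and this quantity is strictly positive; that is, Γ(m+1, m+1) > (m+1) · Γ(m, m+1). -/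
open MeasureTheory

lemma intF (n : ℕ) {w : ℝ} (hw : 0 ≤ w) :
    IntegrableOn (fun t : ℝ => t ^ n * Real.exp (-t)) (Set.Ioi w) := by
  have h := Real.GammaIntegral_convergent (s := (n : ℝ) + 1) (by positivity)
  have h2 : IntegrableOn (fun t : ℝ => t ^ n * Real.exp (-t)) (Set.Ioi 0) := by
    refine h.congr_fun (fun x hx => ?_) measurableSet_Ioi
    simp only [add_sub_cancel_right, Real.rpow_natCast]
    ring
  exact h2.mono_set (Set.Ioi_subset_Ioi hw)

lemma Frec (n : ℕ) {w : ℝ} (hw : 0 ≤ w) :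
    ∫ t in Set.Ioi w, t ^ (n + 1) * Real.exp (-t) =
      w ^ (n + 1) * Real.exp (-w) + (n + 1) * ∫ t in Set.Ioi w, t ^ n * Real.exp (-t) := by
  have hint1 := intF (n + 1) hw
  have hint0 := intF n hw
  have key : ∫ t in Set.Ioi w,
      (t ^ (n + 1) * Real.exp (-t) - ((n : ℝ) + 1) * (t ^ n * Real.exp (-t))) =
      0 - -(w ^ (n + 1) * Real.exp (-w)) := by
    apply integral_Ioi_of_hasDerivAt_of_tendsto'
      (f := fun t : ℝ => -(t ^ (n + 1) * Real.exp (-t)))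
    · intro x _
      have h1 : HasDerivAt (fun t : ℝ => t ^ (n + 1)) (((n : ℝ) + 1) * x ^ n) x := by
        simpa using hasDerivAt_pow (n + 1) x
      have h2 : HasDerivAt (fun t : ℝ => Real.exp (-t)) (-Real.exp (-x)) x := by
        simpa [Function.comp_def] using (Real.hasDerivAt_exp (-x)).comp x (hasDerivAt_neg x)
      have := (h1.mul h2).neg
      convert this using 1
      · rfl
      ring
    · exact hint1.sub (hint0.const_mul _)
    · simpa using (Real.tendsto_pow_mul_exp_neg_atTop_nhds_zero (n + 1)).neg
  rw [integral_sub hint1 (hint0.const_mul _), integral_const_mul] at key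
  push_cast at key ⊢
  linarith

lemma Fclosed (n : ℕ) {w : ℝ} (hw : 0 ≤ w) :
    ∫ t in Set.Ioi w, t ^ n * Real.exp (-t) =
      (Nat.factorial n : ℝ) * Real.exp (-w) *
        ∑ k ∈ Finset.range (n + 1), w ^ k / Nat.factorial k := by
  induction n with
  | zero => simp [integral_exp_neg_Ioi, integral_exp_Iic]
  | succ n ih =>
    rw [Frec n hw, ih,
      Finset.sum_range_succ (fun k => w ^ k / (Nat.factorial k : ℝ)) (n + 1),
      Nat.factorial_succ]
    have h1 : (Nat.factorial n : ℝ) ≠ 0 := by positivity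
    push_cast
    field_simp
    ring

lemma fact_add_le (a : ℕ) : ∀ b : ℕ, (a + b).factorial ≤ a.factorial * (a + b) ^ b := by
  intro b
  induction b with
  | zero => simp
  | succ b ih =>
    calc (a + (b + 1)).factorial = (a + b + 1) * (a + b).factorial := by
          rw [← Nat.add_assoc, Nat.factorial_succ]
      _ ≤ (a + b + 1) * (a.factorial * (a + b) ^ b) := Nat.mul_le_mul_left _ ih
      _ ≤ (a + b + 1) * (a.factorial * (a + b + 1) ^ b) := by
          exact Nat.mul_le_mul_left _ (Nat.mul_le_mul_left _
            (Nat.pow_le_pow_left (Nat.le_succ _) b))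
      _ = a.factorial * (a + (b + 1)) ^ (b + 1) := by ring
/-- For every positive integer `m`,
`g(m, m+1) = (m−1)! e^{−(m+1)} ∑_{k=0}^{m−1} ((m+1)^m/m! − (m+1)^k/k!)`, and this quantity
is strictly positive; that is, `Γ(m+1, m+1) > (m+1) Γ(m, m+1)`. -/
theorem gFun_at_succ_pos (m : ℕ) (hm : 1 ≤ m) :
    gFun m ((m : ℝ) + 1) =
      (Nat.factorial (m - 1) : ℝ) * Real.exp (-((m : ℝ) + 1)) *
        ∑ k ∈ Finset.range m,
          (((m : ℝ) + 1) ^ m / Nat.factorial m - ((m : ℝ) + 1) ^ k / Nat.factorial k) ∧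
    ((m : ℝ) + 1) * iGamma m ((m : ℝ) + 1) < iGamma (m + 1) ((m : ℝ) + 1) := by
  obtain ⟨n, rfl⟩ : ∃ n, m = n + 1 := ⟨m - 1, (Nat.succ_pred_eq_of_pos hm).symm⟩
  set w : ℝ := ((n : ℕ) + 1 : ℕ) + 1 with hw
  have hw0 : (0 : ℝ) ≤ w := by positivity
  have hG1 : iGamma (n + 1 + 1) w =
      (Nat.factorial (n + 1) : ℝ) * Real.exp (-w) *
        ∑ k ∈ Finset.range (n + 2), w ^ k / Nat.factorial k := by
    rw [iGamma, Nat.add_sub_cancel]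
    exact Fclosed (n + 1) hw0
  have hG0 : iGamma (n + 1) w =
      (Nat.factorial n : ℝ) * Real.exp (-w) *
        ∑ k ∈ Finset.range (n + 1), w ^ k / Nat.factorial k := by
    rw [iGamma, Nat.add_sub_cancel]
    exact Fclosed n hw0
  -- first part: the equality
  have heq : gFun (n + 1) w =
      (Nat.factorial ((n + 1) - 1) : ℝ) * Real.exp (-w) *
        ∑ k ∈ Finset.range (n + 1),
          (w ^ (n + 1) / Nat.factorial (n + 1) - w ^ k / Nat.factorial k) := by
    rw [gFun, hG1, hG0, Nat.add_sub_cancel]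
    rw [Finset.sum_sub_distrib, Finset.sum_const, Finset.card_range,
      Finset.sum_range_succ (fun k => w ^ k / (Nat.factorial k : ℝ)) (n + 1)]
    have h1 : (Nat.factorial n : ℝ) ≠ 0 := by positivity
    have h2 : (Nat.factorial (n + 1) : ℝ) ≠ 0 := by positivity
    have h3 : (Nat.factorial (n + 1) : ℝ) = ((n : ℝ) + 1) * Nat.factorial n := by
      rw [Nat.factorial_succ]; push_cast; ring
    push_cast
    rw [h3]
    have h4 : ((n : ℝ) + 1) * Nat.factorial n ≠ 0 := by positivity
    field_simp
    have h5 : ((n : ℝ) * Nat.factorial n + Nat.factorial n)⁻¹ * ((n : ℝ) * Nat.factorial n + Nat.factorial n) = 1 :=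
      inv_mul_cancel₀ (by positivity)
    linear_combination (-(w * w ^ n)) * h5
  -- positivity of the sum
  have hterm : ∀ k ∈ Finset.range (n + 1),
      w ^ k / (Nat.factorial k : ℝ) < w ^ (n + 1) / (Nat.factorial (n + 1) : ℝ) := by
    intro k hk
    rw [Finset.mem_range] at hk
    have hkn : k ≤ n := Nat.lt_succ_iff.mp hk
    have hfk : (0 : ℝ) < Nat.factorial k := by positivity
    have hfn : (0 : ℝ) < Nat.factorial (n + 1) := by positivity
    rw [div_lt_div_iff₀ hfk hfn]
    have hd : k + (n + 1 - k) = n + 1 := by omega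
    have hnat : (n + 1).factorial ≤ k.factorial * (n + 1) ^ (n + 1 - k) := by
      have := fact_add_le k (n + 1 - k)
      rwa [hd] at this
    have hcast : ((n + 1).factorial : ℝ) ≤ (k.factorial : ℝ) * ((n : ℝ) + 1) ^ (n + 1 - k) := by
      exact_mod_cast hnat
    have hlt : ((n : ℝ) + 1) ^ (n + 1 - k) < w ^ (n + 1 - k) := by
      apply pow_lt_pow_left₀ _ (by positivity) (by omega)
      rw [hw]; push_cast; linarith
    have hwpos : (0 : ℝ) < w := by rw [hw]; push_cast; linarith
    calc w ^ k * ((n + 1).factorial : ℝ)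
        ≤ w ^ k * ((k.factorial : ℝ) * ((n : ℝ) + 1) ^ (n + 1 - k)) := by
          apply mul_le_mul_of_nonneg_left hcast (by positivity)
      _ < w ^ k * ((k.factorial : ℝ) * w ^ (n + 1 - k)) := by
          apply mul_lt_mul_of_pos_left _ (by positivity)
          exact mul_lt_mul_of_pos_left hlt hfk
      _ = w ^ (n + 1) * (k.factorial : ℝ) := by
          have hsplit : w ^ (n + 1) = w ^ k * w ^ (n + 1 - k) := by
            rw [← pow_add, hd]
          rw [hsplit]; ring
  have hsumpos : 0 < ∑ k ∈ Finset.range (n + 1),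
      (w ^ (n + 1) / (Nat.factorial (n + 1) : ℝ) - w ^ k / Nat.factorial k) := by
    apply Finset.sum_pos
    · intro k hk
      have := hterm k hk
      linarith
    · exact Finset.nonempty_range_iff.mpr (Nat.succ_ne_zero n)
  have hrhs : 0 < (Nat.factorial ((n + 1) - 1) : ℝ) * Real.exp (-w) *
        ∑ k ∈ Finset.range (n + 1),
          (w ^ (n + 1) / Nat.factorial (n + 1) - w ^ k / Nat.factorial k) := by
    apply mul_pos (mul_pos (by positivity) (Real.exp_pos _)) hsumpos
  have hgpos : 0 < gFun (n + 1) w := heq ▸ hrhs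
  rw [gFun] at hgpos
  have hwcast : ((n + 1 : ℕ) : ℝ) + 1 = w := hw.symm
  constructor
  · exact heq
  · rw [← hwcast] at hgpos ⊢
    linarith
end

section
/- For every positive integer m, let γ*_m be the unique positive root of g(m, w) = Γ(m+1, w) − (m+1)Γ(m, w). Then (γ*_m)^{m+1} · e^{−γ*_m} < m!; equivalently, γ*_m · Γ(m, γ*_m) < m!. -/
open MeasureTheory

lemma integOn (k : ℕ) {w : ℝ} (hw : 0 ≤ w) :
    IntegrableOn (fun t : ℝ => t ^ k * Real.exp (-t)) (Set.Ioi w) := by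
  have h := Real.GammaIntegral_convergent (s := (k : ℝ) + 1) (by positivity)
  have h2 : IntegrableOn (fun t : ℝ => t ^ k * Real.exp (-t)) (Set.Ioi 0) := by
    refine h.congr_fun (fun x hx => ?_) measurableSet_Ioi
    rw [add_sub_cancel_right]; beta_reduce; rw [Real.rpow_natCast, mul_comm]
  exact h2.mono_set (Set.Ioi_subset_Ioi hw)

lemma iGamma_zero_lt (k : ℕ) {w : ℝ} (hw : 0 < w) :
    ∫ t in Set.Ioi w, t ^ k * Real.exp (-t) < (Nat.factorial k : ℝ) := by
  have hfull : (Nat.factorial k : ℝ) = ∫ t in Set.Ioi (0:ℝ), t ^ k * Real.exp (-t) := by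
    rw [← Real.Gamma_nat_eq_factorial k, Real.Gamma_eq_integral (by positivity : (0:ℝ) < k + 1)]
    refine setIntegral_congr_fun measurableSet_Ioi (fun x hx => ?_)
    rw [add_sub_cancel_right, Real.rpow_natCast, mul_comm]
  have hsplit : ∫ t in Set.Ioi (0:ℝ), t ^ k * Real.exp (-t) =
      (∫ t in Set.Ioc (0:ℝ) w, t ^ k * Real.exp (-t)) +
      ∫ t in Set.Ioi w, t ^ k * Real.exp (-t) := by
    rw [← setIntegral_union (Set.Ioc_disjoint_Ioi le_rfl) measurableSet_Ioi
      ((integOn k le_rfl).mono_set Set.Ioc_subset_Ioi_self) (integOn k hw.le),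
      Set.Ioc_union_Ioi_eq_Ioi hw.le]
  have hpos : 0 < ∫ t in Set.Ioc (0:ℝ) w, t ^ k * Real.exp (-t) := by
    rw [← intervalIntegral.integral_of_le hw.le]
    refine intervalIntegral.intervalIntegral_pos_of_pos_on ?_ (fun x hx => ?_) hw
    · exact (Continuous.intervalIntegrable (by continuity) _ _)
    · have := hx.1; positivity
  rw [hfull, hsplit]; linarith

lemma iGamma_rec (k : ℕ) {w : ℝ} (hw : 0 < w) :
    (∫ t in Set.Ioi w, t ^ (k+1) * Real.exp (-t)) =
      w ^ (k+1) * Real.exp (-w) + (k+1) * ∫ t in Set.Ioi w, t ^ k * Real.exp (-t) := by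
  have hderiv : ∀ x ∈ Set.Ici w, HasDerivAt (fun t : ℝ => -(t ^ (k+1) * Real.exp (-t)))
      (x ^ (k+1) * Real.exp (-x) - (k+1) * (x ^ k * Real.exp (-x))) x := by
    intro x _
    have h1 : HasDerivAt (fun t : ℝ => t ^ (k+1)) ((k+1 : ℝ) * x ^ k) x := by
      simpa using hasDerivAt_pow (k+1) x
    have h2 : HasDerivAt (fun t : ℝ => Real.exp (-t)) (-Real.exp (-x)) x := by
      simpa [Function.comp_def] using (Real.hasDerivAt_exp (-x)).comp x (hasDerivAt_neg x)
    have := (h1.mul h2).neg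
    exact this.congr_deriv (by ring)
  have hint : IntegrableOn (fun x : ℝ =>
      x ^ (k+1) * Real.exp (-x) - (k+1) * (x ^ k * Real.exp (-x))) (Set.Ioi w) :=
    (integOn (k+1) hw.le).sub ((integOn k hw.le).const_mul _)
  have hlim : Filter.Tendsto (fun t : ℝ => -(t ^ (k+1) * Real.exp (-t)))
      Filter.atTop (nhds 0) := by
    simpa using (Real.tendsto_pow_mul_exp_neg_atTop_nhds_zero (k+1)).neg
  have hfc := integral_Ioi_of_hasDerivAt_of_tendsto' hderiv hint hlim
  rw [integral_sub (integOn (k+1) hw.le) ((integOn k hw.le).const_mul _),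
    integral_const_mul _ _] at hfc
  simp only [zero_sub, neg_neg] at hfc
  linarith

/-- For every positive integer `m`, if `γ*_m` is the (unique) positive root of `g(m, ·)`,
then `(γ*_m)^{m+1} e^{−γ*_m} < m!`; equivalently, `γ*_m Γ(m, γ*_m) < m!`. -/
theorem G_lt_factorial (m : ℕ) (hm : 1 ≤ m)
    (γ : ℝ) (hγ_pos : 0 < γ) (hγ_root : gFun m γ = 0) :
    γ ^ (m + 1) * Real.exp (-γ) < (Nat.factorial m : ℝ) ∧
    γ * iGamma m γ < (Nat.factorial m : ℝ) := by
  obtain ⟨k, rfl⟩ : ∃ k, m = k + 1 := ⟨m - 1, (Nat.succ_pred_eq_of_pos hm).symm⟩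
  have hI : iGamma (k+1) γ = ∫ t in Set.Ioi γ, t ^ k * Real.exp (-t) := by
    simp [iGamma]
  have hI2 : iGamma (k+2) γ = ∫ t in Set.Ioi γ, t ^ (k+1) * Real.exp (-t) := by
    simp [iGamma]
  -- root equation gives iGamma (k+1) γ = γ^(k+1) e^{-γ}
  have hrec := iGamma_rec k hγ_pos
  have hroot : iGamma (k+1) γ = γ ^ (k+1) * Real.exp (-γ) := by
    have h := hγ_root
    simp only [gFun] at h
    rw [show k + 1 + 1 = k + 2 from rfl] at h
    rw [hI2, hrec, hI] at h
    push_cast at h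
    rw [hI]
    linarith
  -- monotonicity: γ * iGamma (k+1) γ ≤ iGamma (k+2) γ
  have hmono : γ * iGamma (k+1) γ ≤ iGamma (k+2) γ := by
    rw [hI, hI2, ← integral_const_mul _ _]
    refine setIntegral_mono_on ((integOn k hγ_pos.le).const_mul _)
      (integOn (k+1) hγ_pos.le) measurableSet_Ioi (fun x hx => ?_)
    have hxγ : γ ≤ x := le_of_lt hx
    have hx0 : 0 < x := lt_trans hγ_pos hx
    have : γ * x ^ k ≤ x * x ^ k := by
      apply mul_le_mul_of_nonneg_right hxγ (by positivity)
    calc γ * (x ^ k * Real.exp (-x)) = (γ * x ^ k) * Real.exp (-x) := by ring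
      _ ≤ (x * x ^ k) * Real.exp (-x) := by
          exact mul_le_mul_of_nonneg_right this (Real.exp_nonneg _)
      _ = x ^ (k+1) * Real.exp (-x) := by ring
  have hlt : iGamma (k+2) γ < (Nat.factorial (k+1) : ℝ) := by
    rw [hI2]; exact iGamma_zero_lt (k+1) hγ_pos
  have key : γ * iGamma (k+1) γ < (Nat.factorial (k+1) : ℝ) := lt_of_le_of_lt hmono hlt
  constructor
  · calc γ ^ (k+1+1) * Real.exp (-γ) = γ * (γ ^ (k+1) * Real.exp (-γ)) := by ring
      _ = γ * iGamma (k+1) γ := by rw [hroot]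
      _ < _ := key
  · exact key
end

section
/- For each positive integer m, let S_m = U_1 + ⋯ + U_m be the sum of m i.i.d. random variables uniform on [0,1], and let BRev(U^m) = sup_{x ∈ [0,m]} x · P(S_m > x) be the optimal full-bundle revenue. Then lim_{m→∞} [ m(1 + m²) / (2(1 + m)²) ] / BRev(U^m) = 1; in particular, since Rev(U^m) ≤ m(1+m²)/(2(1+m)²), the ratio Rev(U^m)/BRev(U^m) tends to 1 as m → ∞, so full bundling is asymptotically optimal for uniform i.i.d. valuations. -/
open MeasureTheory Filter

/-- The optimal revenue `Rev(F)` of a monopolist selling `m` goods with valuation domain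
`D ⊆ ℝ^m` when the buyer's valuation is distributed according to `F`: the supremum of the
expected payment over all incentive-compatible, individually rational mechanisms `(a, p)`
with allocation probabilities in `[0,1]`. -/
noncomputable def Rev (m : ℕ) (D : Set (Fin m → ℝ)) (F : Measure (Fin m → ℝ)) : ℝ :=
  sSup { r : ℝ | ∃ a : (Fin m → ℝ) → Fin m → ℝ, ∃ p : (Fin m → ℝ) → ℝ,
    Measurable a ∧ Measurable p ∧
    (∀ x ∈ D, ∀ j, a x j ∈ Set.Icc (0:ℝ) 1) ∧
    (∀ x ∈ D, 0 ≤ (∑ j, a x j * x j) - p x) ∧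
    (∀ x ∈ D, ∀ x' ∈ D, (∑ j, a x' j * x j) - p x' ≤ (∑ j, a x j * x j) - p x) ∧
    r = ∫ x, p x ∂F }

/-- The product of `m` independent uniform distributions on `[0,1]`. -/
noncomputable def uniformCube (m : ℕ) : Measure (Fin m → ℝ) :=
  Measure.pi fun _ => volume.restrict (Set.Icc (0:ℝ) 1)

/-- `P(S_m > x)`, where `S_m = U_1 + ⋯ + U_m` is the sum of `m` i.i.d. uniform `[0,1]`
random variables. -/
noncomputable def sumTail (m : ℕ) (x : ℝ) : ℝ :=
  (Measure.map (fun v : Fin m → ℝ => ∑ j, v j) (uniformCube m) (Set.Ioi x)).toReal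

/-- `BRev(U^m) = sup_{x ∈ [0,m]} x · P(S_m > x)`: the optimal revenue from selling all `m`
items as a single bundle at a posted price, for i.i.d. uniform `[0,1]` valuations. -/
noncomputable def BRev (m : ℕ) : ℝ :=
  sSup ((fun x => x * sumTail m x) '' Set.Icc (0:ℝ) m)

instance (m : ℕ) : IsProbabilityMeasure (uniformCube m) := by
  have : IsProbabilityMeasure (volume.restrict (Set.Icc (0:ℝ) 1)) := by
    constructor
    rw [Measure.restrict_apply_univ, Real.volume_Icc]
    norm_num
  unfold uniformCube
  infer_instance

theorem ae_box (m : ℕ) : ∀ᵐ v ∂(uniformCube m), ∀ j, v j ∈ Set.Icc (0:ℝ) 1 := by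
  have h : uniformCube m (Set.univ.pi fun _ => Set.Icc (0:ℝ) 1) = 1 := by
    rw [uniformCube, Measure.pi_pi]
    simp [Real.volume_Icc]
  have := measure_univ (μ := uniformCube m)
  rw [ae_iff]
  have h0 : uniformCube m ((Set.univ.pi fun _ => Set.Icc (0:ℝ) 1)ᶜ) = 0 := by
    rw [measure_compl (by measurability) (by simp), h, this]; simp
  refine measure_mono_null (fun v hv => ?_) h0
  simp only [Set.mem_compl_iff, Set.mem_pi, Set.mem_univ, forall_true_left]
  exact fun h' => hv (fun j => h' j)

theorem integral_pi_prod {n : ℕ} (μ : Fin n → Measure ℝ) [∀ i, SigmaFinite (μ i)]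
    (f : Fin n → ℝ → ℝ) :
    ∫ x : Fin n → ℝ, ∏ i, f i (x i) ∂Measure.pi μ = ∏ i, ∫ x, f i x ∂μ i := by
  induction n with
  | zero => simp [Measure.real]
  | succ n n_ih =>
      calc
        _ = ∫ x : ℝ × (Fin n → ℝ),
            f 0 x.1 * ∏ i : Fin n, f (Fin.succ i) (x.2 i) ∂((μ 0).prod (Measure.pi fun i => μ (Fin.succ i))) := by
          rw [← ((measurePreserving_piFinSuccAbove μ 0).symm).integral_comp']
          simp_rw [MeasurableEquiv.piFinSuccAbove_symm_apply, Fin.insertNthEquiv,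
            Fin.prod_univ_succ, Fin.insertNth_zero, Equiv.coe_fn_mk, Fin.cons_succ,
            Fin.zero_succAbove, Fin.cons_zero, cast_eq]
        _ = (∫ x, f 0 x ∂μ 0) * ∏ i : Fin n, ∫ x : ℝ, f (Fin.succ i) x ∂μ (Fin.succ i) := by
          rw [← n_ih, ← integral_prod_mul]
        _ = ∏ i, ∫ x, f i x ∂μ i := by rw [Fin.prod_univ_succ]

noncomputable def nu : Measure ℝ := volume.restrict (Set.Icc (0:ℝ) 1)

lemma nu_integral (f : ℝ → ℝ) : ∫ x, f x ∂nu = ∫ x in (0:ℝ)..1, f x := by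
  rw [nu, intervalIntegral.integral_of_le (by norm_num), ← MeasureTheory.integral_Icc_eq_integral_Ioc]

lemma nu_int_one : ∫ x, (1:ℝ) ∂nu = 1 := by
  rw [nu_integral]; simp

lemma nu_int_c : ∫ x, (x - 1/2) ∂nu = 0 := by
  rw [nu_integral]
  have : ∀ x : ℝ, x - 1/2 = id (x - 1/2) := fun x => rfl
  rw [intervalIntegral.integral_comp_sub_right (fun x => x) (1/2)]
  norm_num [integral_id]

lemma nu_int_sq : ∫ x, (x - 1/2) * (x - 1/2) ∂nu = 1/12 := by
  rw [nu_integral]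
  have h : ∀ x : ℝ, (x - 1/2) * (x - 1/2) = (fun y => y^2) (x - 1/2) := by intro x; ring
  simp_rw [h]
  rw [intervalIntegral.integral_comp_sub_right (fun y => y^2) (1/2)]
  rw [integral_pow]
  norm_num

lemma nu_int_id : ∫ x, x ∂nu = 1/2 := by
  rw [nu_integral]; simp [integral_id]

lemma uniformCube_eq (m : ℕ) : uniformCube m = Measure.pi fun _ => nu := rfl

instance : SigmaFinite nu := by unfold nu; infer_instance

instance : IsProbabilityMeasure nu := by
  constructor
  rw [nu, Measure.restrict_apply_univ, Real.volume_Icc]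
  norm_num

lemma integrable_of_bound {m : ℕ} {f : (Fin m → ℝ) → ℝ} (hf : Measurable f) (C : ℝ)
    (h : ∀ v, (∀ j, v j ∈ Set.Icc (0:ℝ) 1) → |f v| ≤ C) : Integrable f (uniformCube m) :=
  Integrable.mono' (integrable_const C) hf.aestronglyMeasurable
    ((ae_box m).mono (fun v hv => by simpa [Real.norm_eq_abs] using h v hv))

lemma integral_coord (m : ℕ) (j : Fin m) : ∫ v, v j ∂uniformCube m = 1/2 := by
  have h : ∀ v : Fin m → ℝ, v j = ∏ i, (fun i t => if j = i then t else 1) i (v i) := by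
    intro v; rw [Finset.prod_ite_eq]; simp
  simp_rw [h]
  rw [uniformCube_eq]
  refine (integral_pi_prod (fun _ => nu) (fun i t => if j = i then t else 1)).trans ?_
  have : ∀ i : Fin m, (∫ x, (if j = i then x else 1) ∂nu) = if j = i then 1/2 else 1 := by
    intro i
    by_cases hij : j = i
    · simp only [hij, if_pos rfl]; exact nu_int_id
    · simp only [if_neg hij]; exact nu_int_one
  rw [Finset.prod_congr rfl (fun i _ => this i), Finset.prod_ite_eq]
  simp

lemma integral_coord_mul {m : ℕ} {j k : Fin m} (hjk : j ≠ k) :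
    ∫ v, (v j - 1/2) * (v k - 1/2) ∂uniformCube m = 0 := by
  have h : ∀ v : Fin m → ℝ, (v j - 1/2) * (v k - 1/2)
      = ∏ i, (fun i t => if j = i then t - 1/2 else if k = i then t - 1/2 else 1) i (v i) := by
    intro v
    rw [← Finset.mul_prod_erase _ _ (Finset.mem_univ j),
      ← Finset.mul_prod_erase _ _ (Finset.mem_erase.2 ⟨hjk.symm, Finset.mem_univ k⟩)]
    rw [Finset.prod_eq_one (fun i hi => by
      simp only [Finset.mem_erase] at hi
      obtain ⟨hik, hij, -⟩ := hi
      simp [Ne.symm hij, Ne.symm hik])]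
    simp [hjk]
  simp_rw [h]
  rw [uniformCube_eq]
  refine (integral_pi_prod (fun _ => nu)
    (fun i t => if j = i then t - 1/2 else if k = i then t - 1/2 else 1)).trans ?_
  refine Finset.prod_eq_zero (Finset.mem_univ j) ?_
  simpa using nu_int_c

lemma integral_coord_sq (m : ℕ) (j : Fin m) :
    ∫ v, (v j - 1/2) * (v j - 1/2) ∂uniformCube m = 1/12 := by
  have h : ∀ v : Fin m → ℝ, (v j - 1/2) * (v j - 1/2)
      = ∏ i, (fun i t => if j = i then (t - 1/2) * (t - 1/2) else 1) i (v i) := by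
    intro v; rw [Finset.prod_ite_eq]; simp
  simp_rw [h]
  rw [uniformCube_eq]
  refine (integral_pi_prod (fun _ => nu)
    (fun i t => if j = i then (t - 1/2) * (t - 1/2) else 1)).trans ?_
  have : ∀ i : Fin m, (∫ x, (if j = i then (x - 1/2) * (x - 1/2) else 1) ∂nu)
      = if j = i then 1/12 else 1 := by
    intro i
    by_cases hij : j = i
    · simp only [hij, if_pos rfl]; exact nu_int_sq
    · simp only [if_neg hij]; exact nu_int_one
  rw [Finset.prod_congr rfl (fun i _ => this i), Finset.prod_ite_eq]
  simp

lemma integrable_coord_mul (m : ℕ) (j k : Fin m) :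
    Integrable (fun v => (v j - 1/2) * (v k - 1/2)) (uniformCube m) := by
  refine integrable_of_bound (by fun_prop) 1 (fun v hv => ?_)
  have h1 := hv j; have h2 := hv k
  simp only [Set.mem_Icc] at h1 h2
  rw [abs_mul]
  have ha : |v j - 1/2| ≤ 1 := by rw [abs_le]; constructor <;> linarith
  have hb : |v k - 1/2| ≤ 1 := by rw [abs_le]; constructor <;> linarith
  nlinarith [abs_nonneg (v j - 1/2), abs_nonneg (v k - 1/2)]

lemma integral_sum (m : ℕ) : ∫ v, (∑ j, v j) ∂uniformCube m = m/2 := by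
  rw [integral_finset_sum _ (fun j _ => integrable_of_bound (by fun_prop) 1
    (fun v hv => by have := hv j; simp only [Set.mem_Icc] at this; rw [abs_le]; constructor <;> linarith))]
  rw [Finset.sum_congr rfl (fun j _ => integral_coord m j)]
  simp [Finset.sum_const, Finset.card_univ]
  ring

lemma integrable_sum (m : ℕ) : Integrable (fun v => ∑ j, v j) (uniformCube m) := by
  refine integrable_of_bound (by fun_prop) (m:ℝ) (fun v hv => ?_)
  rw [abs_le]
  constructor
  · have : (0:ℝ) ≤ ∑ j, v j := Finset.sum_nonneg (fun j _ => (hv j).1)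
    have hm : (0:ℝ) ≤ m := Nat.cast_nonneg m
    linarith
  · calc ∑ j, v j ≤ ∑ _j : Fin m, (1:ℝ) := Finset.sum_le_sum (fun j _ => (hv j).2)
      _ = m := by simp

lemma integral_var (m : ℕ) : ∫ v, ((∑ j, v j) - (m:ℝ)/2)^2 ∂uniformCube m = (m:ℝ)/12 := by
  have key : ∀ v : Fin m → ℝ, ((∑ j, v j) - (m:ℝ)/2)^2
      = ∑ j, ∑ k, (v j - 1/2) * (v k - 1/2) := by
    intro v
    have h1 : (∑ j, v j) - (m:ℝ)/2 = ∑ j, (v j - 1/2) := by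
      rw [Finset.sum_sub_distrib, Finset.sum_const, Finset.card_univ, Fintype.card_fin,
        nsmul_eq_mul]
      ring
    rw [h1, sq, Finset.sum_mul_sum]
  simp_rw [key]
  rw [integral_finset_sum _ (fun j _ => integrable_finset_sum _
    (fun k _ => integrable_coord_mul m j k))]
  have : ∀ j : Fin m, (∫ v, ∑ k, (v j - 1/2) * (v k - 1/2) ∂uniformCube m) = 1/12 := by
    intro j
    rw [integral_finset_sum _ (fun k _ => integrable_coord_mul m j k)]
    have : ∀ k : Fin m, (∫ v, (v j - 1/2) * (v k - 1/2) ∂uniformCube m)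
        = if j = k then 1/12 else 0 := by
      intro k
      by_cases hjk : j = k
      · rw [if_pos hjk]; subst hjk; exact integral_coord_sq m j
      · rw [if_neg hjk]; exact integral_coord_mul hjk
    rw [Finset.sum_congr rfl (fun k _ => this k), Finset.sum_ite_eq]
    simp
  rw [Finset.sum_congr rfl (fun j _ => this j)]
  rw [Finset.sum_const, Finset.card_univ, Fintype.card_fin, nsmul_eq_mul]
  ring

lemma msum (m : ℕ) : Measurable (fun v : Fin m → ℝ => ∑ j, v j) := by fun_prop

lemma sumTail_eq (m : ℕ) (x : ℝ) :
    sumTail m x = ((uniformCube m) {v | x < ∑ j, v j}).toReal := by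
  rw [sumTail, Measure.map_apply (msum m) measurableSet_Ioi]
  rfl

lemma sumTail_nonneg (m : ℕ) (x : ℝ) : 0 ≤ sumTail m x := ENNReal.toReal_nonneg

lemma markov (m : ℕ) {x : ℝ} (hx : 0 ≤ x) : x * sumTail m x ≤ (m:ℝ)/2 := by
  rw [sumTail_eq]
  set A : Set (Fin m → ℝ) := {v | x < ∑ j, v j} with hA
  have hAm : MeasurableSet A := measurableSet_lt measurable_const (msum m)
  have h1 : x * ((uniformCube m) A).toReal = ∫ _v in A, x ∂uniformCube m := by
    rw [setIntegral_const]; rw [smul_eq_mul]; ring; rfl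
  rw [h1]
  calc ∫ _v in A, x ∂uniformCube m ≤ ∫ v in A, (∑ j, v j) ∂uniformCube m := by
        refine setIntegral_mono_on (integrable_const x).integrableOn
          (integrable_sum m).integrableOn hAm (fun v hv => le_of_lt hv)
    _ ≤ ∫ v, (∑ j, v j) ∂uniformCube m := by
        refine setIntegral_le_integral (integrable_sum m) ?_
        filter_upwards [ae_box m] with v hv
        exact Finset.sum_nonneg (fun j _ => (hv j).1)
    _ = (m:ℝ)/2 := integral_sum m

lemma brev_le (m : ℕ) : BRev m ≤ (m:ℝ)/2 := by
  refine Real.sSup_le ?_ (by positivity)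
  rintro r ⟨x, hx, rfl⟩
  exact markov m hx.1

lemma brev_bddAbove (m : ℕ) : BddAbove ((fun x => x * sumTail m x) '' Set.Icc (0:ℝ) m) := by
  refine ⟨(m:ℝ)/2, ?_⟩
  rintro r ⟨x, hx, rfl⟩
  exact markov m hx.1

lemma integrable_var (m : ℕ) :
    Integrable (fun v => ((∑ j, v j) - (m:ℝ)/2)^2) (uniformCube m) := by
  refine integrable_of_bound (by fun_prop) ((m:ℝ)^2) (fun v hv => ?_)
  have h0 : (0:ℝ) ≤ ∑ j, v j := Finset.sum_nonneg (fun j _ => (hv j).1)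
  have h1 : ∑ j, v j ≤ m := by
    calc ∑ j, v j ≤ ∑ _j : Fin m, (1:ℝ) := Finset.sum_le_sum (fun j _ => (hv j).2)
      _ = m := by simp
  rw [abs_of_nonneg (sq_nonneg _)]
  nlinarith [Nat.cast_nonneg (α := ℝ) m]

lemma chebyshev (m : ℕ) {a : ℝ} (ha : 0 < a) :
    1 - ((m:ℝ)/12)/a^2 ≤ sumTail m ((m:ℝ)/2 - a) := by
  set π := uniformCube m
  set S : (Fin m → ℝ) → ℝ := fun v => ∑ j, v j with hS
  set A : Set (Fin m → ℝ) := {v | a^2 ≤ (S v - (m:ℝ)/2)^2} with hAdef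
  have hAm : MeasurableSet A := measurableSet_le measurable_const (by fun_prop)
  have hkey : a^2 * ((π) A).toReal ≤ (m:ℝ)/12 := by
    have h1 : a^2 * (π A).toReal = ∫ _v in A, a^2 ∂π := by
      rw [setIntegral_const, smul_eq_mul]; ring; rfl
    rw [h1]
    calc ∫ _v in A, a^2 ∂π ≤ ∫ v in A, (S v - (m:ℝ)/2)^2 ∂π :=
          setIntegral_mono_on (integrable_const _).integrableOn
            (integrable_var m).integrableOn hAm (fun v hv => hv)
      _ ≤ ∫ v, (S v - (m:ℝ)/2)^2 ∂π :=
          setIntegral_le_integral (integrable_var m)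
            (Filter.Eventually.of_forall (fun v => sq_nonneg _))
      _ = (m:ℝ)/12 := integral_var m
  have hAle : (π A).toReal ≤ ((m:ℝ)/12)/a^2 := by
    rw [le_div_iff₀ (by positivity)]
    linarith [hkey]
  set B : Set (Fin m → ℝ) := {v | (m:ℝ)/2 - a < S v} with hBdef
  have hBm : MeasurableSet B := measurableSet_lt measurable_const (by fun_prop)
  have hsub : Bᶜ ⊆ A := by
    intro v hv
    simp only [hBdef, Set.mem_compl_iff, Set.mem_setOf_eq, not_lt] at hv
    have : a ≤ (m:ℝ)/2 - S v := by linarith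
    simp only [hAdef, Set.mem_setOf_eq]
    nlinarith
  have hcompl : (π B).toReal = 1 - (π Bᶜ).toReal := by
    have h2 : π (Bᶜᶜ) = 1 - π Bᶜ := by
      rw [measure_compl hBm.compl (measure_ne_top _ _), measure_univ]
    rw [compl_compl] at h2
    rw [h2, ENNReal.toReal_sub_of_le prob_le_one ENNReal.one_ne_top, ENNReal.toReal_one]
  have hBc : (π Bᶜ).toReal ≤ ((m:ℝ)/12)/a^2 :=
    le_trans (ENNReal.toReal_mono (measure_ne_top _ _) (measure_mono hsub)) hAle
  rw [sumTail_eq]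
  have : {v : Fin m → ℝ | (m:ℝ)/2 - a < ∑ j, v j} = B := rfl
  rw [this, hcompl]
  linarith

lemma brev_lb (m : ℕ) {a : ℝ} (ha : 0 < a) (ham : a ≤ (m:ℝ)/2) :
    ((m:ℝ)/2 - a) * (1 - ((m:ℝ)/12)/a^2) ≤ BRev m := by
  have hx0 : 0 ≤ (m:ℝ)/2 - a := by linarith
  have hxm : (m:ℝ)/2 - a ≤ m := by
    have : (0:ℝ) ≤ m := Nat.cast_nonneg m
    linarith
  have hmem : ((m:ℝ)/2 - a) * sumTail m ((m:ℝ)/2 - a)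
      ∈ (fun x => x * sumTail m x) '' Set.Icc (0:ℝ) m :=
    ⟨(m:ℝ)/2 - a, ⟨hx0, hxm⟩, rfl⟩
  calc ((m:ℝ)/2 - a) * (1 - ((m:ℝ)/12)/a^2)
      ≤ ((m:ℝ)/2 - a) * sumTail m ((m:ℝ)/2 - a) :=
        mul_le_mul_of_nonneg_left (chebyshev m ha) hx0
    _ ≤ BRev m := le_csSup (brev_bddAbove m) hmem

def RevSet (m : ℕ) (D : Set (Fin m → ℝ)) (F : Measure (Fin m → ℝ)) : Set ℝ :=
  { r : ℝ | ∃ a : (Fin m → ℝ) → Fin m → ℝ, ∃ p : (Fin m → ℝ) → ℝ,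
    Measurable a ∧ Measurable p ∧
    (∀ x ∈ D, ∀ j, a x j ∈ Set.Icc (0:ℝ) 1) ∧
    (∀ x ∈ D, 0 ≤ (∑ j, a x j * x j) - p x) ∧
    (∀ x ∈ D, ∀ x' ∈ D, (∑ j, a x' j * x j) - p x' ≤ (∑ j, a x j * x j) - p x) ∧
    r = ∫ x, p x ∂F }

lemma Rev_eq (m : ℕ) (D : Set (Fin m → ℝ)) (F : Measure (Fin m → ℝ)) :
    Rev m D F = sSup (RevSet m D F) := rfl

lemma mem_D_iff (m : ℕ) (v : Fin m → ℝ) :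
    v ∈ Set.Icc (0 : Fin m → ℝ) 1 ↔ ∀ j, v j ∈ Set.Icc (0:ℝ) 1 := by
  simp only [Set.mem_Icc, Pi.le_def, Set.mem_Icc]
  constructor
  · rintro ⟨h1, h2⟩ j; exact ⟨h1 j, h2 j⟩
  · intro h; exact ⟨fun j => (h j).1, fun j => (h j).2⟩

lemma ae_D (m : ℕ) : ∀ᵐ v ∂(uniformCube m), v ∈ Set.Icc (0 : Fin m → ℝ) 1 := by
  filter_upwards [ae_box m] with v hv
  exact (mem_D_iff m v).2 hv

lemma zero_mem_RevSet (m : ℕ) : (0:ℝ) ∈ RevSet m (Set.Icc 0 1) (uniformCube m) := by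
  refine ⟨fun _ _ => 0, fun _ => 0, measurable_const, measurable_const, ?_, ?_, ?_, by simp⟩
  · intro x _ j; exact ⟨le_refl _, zero_le_one⟩
  · intro x _; simp
  · intro x _ x' _; simp

lemma RevSet_le (m : ℕ) {r : ℝ} (hr : r ∈ RevSet m (Set.Icc 0 1) (uniformCube m)) :
    r ≤ (m:ℝ)/2 := by
  obtain ⟨a, p, hma, hmp, ha01, hIR, _hIC, hr⟩ := hr
  subst hr
  by_cases hp : Integrable p (uniformCube m)
  · calc ∫ x, p x ∂uniformCube m
          ≤ ∫ v, (∑ j, v j) ∂uniformCube m := by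
            refine integral_mono_ae hp (integrable_sum m) ?_
            filter_upwards [ae_D m] with v hv
            have h1 := hIR v hv
            have h2 : (∑ j, a v j * v j) ≤ ∑ j, v j := by
              refine Finset.sum_le_sum (fun j _ => ?_)
              have h3 := ha01 v hv j
              have h4 := ((mem_D_iff m v).1 hv) j
              simp only [Set.mem_Icc] at h3 h4
              nlinarith
            linarith
      _ = (m:ℝ)/2 := integral_sum m
  · rw [integral_undef hp]; positivity

lemma rev_nonneg (m : ℕ) : 0 ≤ Rev m (Set.Icc 0 1) (uniformCube m) := by
  rw [Rev_eq]
  exact le_csSup ⟨(m:ℝ)/2, fun r hr => RevSet_le m hr⟩ (zero_mem_RevSet m)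

lemma rev_le (m : ℕ) : Rev m (Set.Icc 0 1) (uniformCube m) ≤ (m:ℝ)/2 := by
  rw [Rev_eq]
  exact Real.sSup_le (fun r hr => RevSet_le m hr) (by positivity)

lemma posted_price_mem (m : ℕ) {t : ℝ} (ht : 0 ≤ t) :
    t * sumTail m t ∈ RevSet m (Set.Icc 0 1) (uniformCube m) := by
  classical
  refine ⟨fun v _ => if t < ∑ j, v j then 1 else 0,
    fun v => if t < ∑ j, v j then t else 0, ?_, ?_, ?_, ?_, ?_, ?_⟩
  · refine measurable_pi_lambda _ (fun j => ?_)
    exact Measurable.ite (measurableSet_lt measurable_const (msum m))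
      measurable_const measurable_const
  · exact Measurable.ite (measurableSet_lt measurable_const (msum m))
      measurable_const measurable_const
  · intro x _ j
    by_cases h : t < ∑ j, x j <;> simp [h]
  · intro x _
    by_cases h : t < ∑ j, x j
    · simp only [if_pos h, one_mul]
      linarith
    · simp [h]
  · intro x _ x' _
    by_cases h : t < ∑ j, x j <;> by_cases h' : t < ∑ j, x' j <;>
      simp only [if_pos, if_neg, h, h', if_true, if_false, one_mul, zero_mul,
        Finset.sum_const_zero, sub_zero, zero_sub] <;> (try push_neg at *) <;> linarith
  · have hind : (fun v : Fin m → ℝ => if t < ∑ j, v j then t else 0)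
        = Set.indicator {v : Fin m → ℝ | t < ∑ j, v j} (fun _ => t) := by
      ext v
      simp [Set.indicator_apply, Set.mem_setOf_eq]
    rw [hind, integral_indicator_const _ (measurableSet_lt measurable_const (msum m)),
      smul_eq_mul, sumTail_eq]
    ring
    rfl

lemma brev_le_rev (m : ℕ) : BRev m ≤ Rev m (Set.Icc 0 1) (uniformCube m) := by
  refine Real.sSup_le ?_ (rev_nonneg m)
  rintro r ⟨x, hx, rfl⟩
  rw [Rev_eq]
  exact le_csSup ⟨(m:ℝ)/2, fun r hr => RevSet_le m hr⟩ (posted_price_mem m hx.1)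

lemma div_div_div' (x y c : ℝ) (hc : c ≠ 0) : (x/c)/(y/c) = x/y := by
  rcases eq_or_ne y 0 with h | h
  · simp [h]
  · field_simp

noncomputable def gg (m : ℕ) : ℝ :=
  (1 - 2 * (m:ℝ) ^ (-(1/4) : ℝ)) * (1 - (1/12) * (m:ℝ) ^ (-(1/2) : ℝ))

lemma gg_tendsto : Tendsto gg atTop (nhds 1) := by
  have h1 : Tendsto (fun m : ℕ => (m:ℝ) ^ (-(1/4) : ℝ)) atTop (nhds 0) :=
    (tendsto_rpow_neg_atTop (by norm_num)).comp tendsto_natCast_atTop_atTop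
  have h2 : Tendsto (fun m : ℕ => (m:ℝ) ^ (-(1/2) : ℝ)) atTop (nhds 0) :=
    (tendsto_rpow_neg_atTop (by norm_num)).comp tendsto_natCast_atTop_atTop
  have h3 := ((tendsto_const_nhds (x := (1:ℝ))).sub (h1.const_mul 2)).mul
    ((tendsto_const_nhds (x := (1:ℝ))).sub (h2.const_mul (1/12)))
  norm_num at h3
  exact h3.congr (fun m => by simp only [gg]; try norm_num)

lemma gg_le_ratio : ∀ᶠ m : ℕ in atTop, gg m ≤ BRev m / ((m:ℝ)/2) := by
  filter_upwards [eventually_ge_atTop 16] with m hm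
  have hm1 : (16:ℝ) ≤ (m:ℝ) := by exact_mod_cast hm
  have hmpos : (0:ℝ) < (m:ℝ) := by linarith
  set u : ℝ := (m:ℝ) with hu
  set a : ℝ := u ^ ((3:ℝ)/4) with hadef
  have ha : (0:ℝ) < a := Real.rpow_pos_of_pos hmpos _
  have hq : a = u * u ^ (-(1/4) : ℝ) := by
    have h5 : u * u ^ (-(1/4):ℝ) = u ^ ((3:ℝ)/4) := by
      nth_rewrite 1 [← Real.rpow_one u]
      rw [← Real.rpow_add hmpos]
      norm_num
    rw [hadef, ← h5]
  have ha2 : a^2 = u ^ ((3:ℝ)/2) := by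
    rw [hadef, sq, ← Real.rpow_add hmpos]
    norm_num
  have hu12 : u / a^2 = u ^ (-(1/2) : ℝ) := by
    rw [ha2, show (-(1/2):ℝ) = 1 - 3/2 by norm_num, Real.rpow_sub hmpos, Real.rpow_one]
  have h16 : (16:ℝ) ^ ((1:ℝ)/4) = 2 := by
    have h2 : (16:ℝ) = (2:ℝ) ^ (4:ℝ) := by
      rw [show (4:ℝ) = ((4:ℕ):ℝ) by norm_num, Real.rpow_natCast]
      norm_num
    rw [h2, ← Real.rpow_mul (by norm_num)]
    norm_num
  have ht14 : u ^ (-(1/4):ℝ) ≤ 1/2 := by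
    rw [Real.rpow_neg hmpos.le]
    have h4 : (2:ℝ) ≤ u ^ ((1:ℝ)/4) := by
      rw [← h16]
      exact Real.rpow_le_rpow (by norm_num) hm1 (by norm_num)
    rw [show (1:ℝ)/2 = 2⁻¹ by norm_num]
    exact inv_anti₀ (by norm_num) h4
  have ham : a ≤ u/2 := by
    rw [hq]
    calc u * u ^ (-(1/4):ℝ) ≤ u * (1/2) := by
          exact mul_le_mul_of_nonneg_left ht14 hmpos.le
      _ = u/2 := by ring
  have ht14pos : (0:ℝ) < u ^ (-(1/4):ℝ) := Real.rpow_pos_of_pos hmpos _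
  rw [le_div_iff₀ (by positivity : (0:ℝ) < u/2)]
  have key : gg m * (u/2) = (u/2 - a) * (1 - (u/12)/a^2) := by
    rw [gg, ← hu]
    rw [← hu12, hq]
    have hane : u * u ^ (-(1/4):ℝ) ≠ 0 := by positivity
    field_simp
  rw [key]
  exact brev_lb m ha ham

lemma brev_ratio_tendsto : Tendsto (fun m : ℕ => BRev m / ((m:ℝ)/2)) atTop (nhds 1) := by
  refine tendsto_of_tendsto_of_tendsto_of_le_of_le' gg_tendsto tendsto_const_nhds
    gg_le_ratio ?_
  filter_upwards [eventually_ge_atTop 1] with m hm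
  have hmpos : (0:ℝ) < (m:ℝ)/2 := by
    have : (1:ℝ) ≤ (m:ℝ) := by exact_mod_cast hm
    linarith
  rw [div_le_one hmpos]
  exact brev_le m

lemma rev_ratio_tendsto : Tendsto (fun m : ℕ => Rev m (Set.Icc 0 1) (uniformCube m) / ((m:ℝ)/2)) atTop (nhds 1) := by
  refine tendsto_of_tendsto_of_tendsto_of_le_of_le' brev_ratio_tendsto tendsto_const_nhds
    ?_ ?_
  · filter_upwards [eventually_ge_atTop 1] with m hm
    have hmpos : (0:ℝ) < (m:ℝ)/2 := by
      have : (1:ℝ) ≤ (m:ℝ) := by exact_mod_cast hm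
      linarith
    exact (div_le_div_iff_of_pos_right hmpos).2 (brev_le_rev m)
  · filter_upwards [eventually_ge_atTop 1] with m hm
    have hmpos : (0:ℝ) < (m:ℝ)/2 := by
      have : (1:ℝ) ≤ (m:ℝ) := by exact_mod_cast hm
      linarith
    rw [div_le_one hmpos]
    exact rev_le m

lemma f_ratio_tendsto :
    Tendsto (fun m : ℕ => ((m:ℝ) * (1 + (m:ℝ)^2) / (2 * (1 + (m:ℝ))^2)) / ((m:ℝ)/2))
      atTop (nhds 1) := by
  have h0 : Tendsto (fun m : ℕ => ((m:ℝ))⁻¹) atTop (nhds 0) :=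
    tendsto_inv_atTop_nhds_zero_nat
  have hlim : Tendsto (fun m : ℕ => (((m:ℝ))⁻¹ * ((m:ℝ))⁻¹ + 1) / ((((m:ℝ))⁻¹ + 1)^2))
      atTop (nhds 1) := by
    have := (((h0.mul h0).add (tendsto_const_nhds (x := (1:ℝ)))).div
      (((h0.add (tendsto_const_nhds (x := (1:ℝ)))).pow 2)) (by norm_num))
    rw [show ((0:ℝ) * 0 + 1) / (0 + 1) ^ 2 = 1 by norm_num] at this; exact this
  refine hlim.congr' ?_
  filter_upwards [eventually_ge_atTop 1] with m hm
  have hmne : ((m:ℝ)) ≠ 0 := by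
    have : (1:ℝ) ≤ (m:ℝ) := by exact_mod_cast hm
    linarith
  have h1ne : (1:ℝ) + (m:ℝ) ≠ 0 := by positivity
  field_simp


/-- **Full bundling is asymptotically optimal for uniform i.i.d. valuations.**
The ratio between the upper bound `m(1+m²)/(2(1+m)²)` on `Rev(U^m)` and `BRev(U^m)` tends
to `1` as `m → ∞`; in particular (since `BRev(U^m) ≤ Rev(U^m) ≤ m(1+m²)/(2(1+m)²)`) the
ratio `Rev(U^m)/BRev(U^m)` tends to `1` as `m → ∞`. -/
theorem full_bundle_asymptotically_optimal_uniform :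
    Tendsto (fun m : ℕ =>
        ((m : ℝ) * (1 + (m : ℝ) ^ 2) / (2 * (1 + (m : ℝ)) ^ 2)) / BRev m)
      atTop (nhds 1) ∧
    Tendsto (fun m : ℕ => Rev m (Set.Icc 0 1) (uniformCube m) / BRev m)
      atTop (nhds 1) := by

  have hB := brev_ratio_tendsto
  constructor
  · have h1 : Tendsto (fun m : ℕ =>
        (((m:ℝ) * (1 + (m:ℝ)^2) / (2 * (1 + (m:ℝ))^2)) / ((m:ℝ)/2)) / (BRev m / ((m:ℝ)/2)))
        atTop (nhds 1) := by
      have := f_ratio_tendsto.div hB one_ne_zero; rw [div_one] at this; exact this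
    refine h1.congr' ?_
    filter_upwards [eventually_ge_atTop 1] with m hm
    have hmpos : (0:ℝ) < (m:ℝ)/2 := by
      have : (1:ℝ) ≤ (m:ℝ) := by exact_mod_cast hm
      linarith
    exact div_div_div' _ _ _ (ne_of_gt hmpos)
  · have h1 : Tendsto (fun m : ℕ =>
        (Rev m (Set.Icc 0 1) (uniformCube m) / ((m:ℝ)/2)) / (BRev m / ((m:ℝ)/2))) atTop (nhds 1) := by
      have := rev_ratio_tendsto.div hB one_ne_zero; rw [div_one] at this; exact this
    refine h1.congr' ?_
    filter_upwards [eventually_ge_atTop 1] with m hm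
    have hmpos : (0:ℝ) < (m:ℝ)/2 := by
      have : (1:ℝ) ≤ (m:ℝ) := by exact_mod_cast hm
      linarith
    exact div_div_div' _ _ _ (ne_of_gt hmpos)
end
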